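/- Let a group G act without inversions on a tree T with finitely many G-orbits of vertices and finitely many G-orbits of edges, with every edge stabilizer G_e finite, and with every vertex stabilizer G_v infinite. If H and K are subgroups of finite index in G, then C̄_T(H ∩ K) ≤ 2N · C̄_T(H) · C̄_T(K), where N := sup{|G_x ∩ HK| : x an edge of T}. -/

import Mathlib

open MulAction Pointwise

namespace Paper

variable {G V : Type*} [Group G] [MulAction G V]

/-- An element is hyperbolic if it fixes no vertex of the tree `T`. -/
def IsHyperbolic (_T : SimpleGraph V) (g : G) : Prop := ∀ v : V, g • v ≠ v

/-- The number of orbits of the action of the group `H` on the subset `S`. -/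
noncomputable def orbCount (H : Type*) [Group H] {α : Type*} [MulAction H α]
    (S : Set α) : ℕ :=
  Nat.card (Quotient (Setoid.comap (Subtype.val : S → α) (MulAction.orbitRel H α)))

/-- The action of the group `H` on the subset `S` has finitely many orbits. -/
def QuotFinite (H : Type*) [Group H] {α : Type*} [MulAction H α] (S : Set α) : Prop :=
  Finite (Quotient (Setoid.comap (Subtype.val : S → α) (MulAction.orbitRel H α)))

/-- Ordered edges of the induced subgraph of `T` on `S`. -/
def orderedEdges (T : SimpleGraph V) (S : Set V) : Set (V × V) :=
  {p : V × V | p.1 ∈ S ∧ p.2 ∈ S ∧ T.Adj p.1 p.2}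

/-- `S` is the vertex set of a nonempty `H`-invariant subtree of `T`. -/
def InvSubtree (T : SimpleGraph V) (H : Subgroup G) (S : Set V) : Prop :=
  (∀ h ∈ H, ∀ v ∈ S, h • v ∈ S) ∧ (T.induce S).Connected

/-- The (vertex set of the) minimal `H`-invariant subtree `T_H` of `T`: the
intersection of all nonempty `H`-invariant subtrees.  (When `H` contains a
hyperbolic element this is the unique minimal nonempty `H`-invariant subtree.) -/
def minSubtree (T : SimpleGraph V) (H : Subgroup G) : Set V :=
  ⋂₀ {S : Set V | InvSubtree T H S}

/-- `v` is `H`-degenerate with respect to the subtree with vertex set `S`: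
`H_v = H_e` for some edge `e` of `S` incident to `v`. -/
def DegenIn (T : SimpleGraph V) (H : Subgroup G) (S : Set V) (v : V) : Prop :=
  ∃ w ∈ S, T.Adj v w ∧ H ⊓ MulAction.stabilizer G v ≤ MulAction.stabilizer G w

/-- The `H`-nondegenerate vertices of the subtree with vertex set `S`. -/
def ndegSet (T : SimpleGraph V) (H : Subgroup G) (S : Set V) : Set V :=
  {v ∈ S | ¬ DegenIn T H S v}

/-- The star of `[v]_H` in the quotient graph `S/H`, as the set of ordered edges of
`S` with initial vertex in the `H`-orbit of `v` (an edge of the quotient in the star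
of `[v]_H` is an `H`-orbit of such pairs). -/
def starSet (T : SimpleGraph V) (H : Subgroup G) (S : Set V) (v : V) : Set (V × V) :=
  {p : V × V | p.1 ∈ S ∧ p.2 ∈ S ∧ T.Adj p.1 p.2 ∧ p.1 ∈ MulAction.orbit H v}

/-- The degree of the vertex `[v]_H` in the quotient graph `S/H`: the number of
`H`-orbits of ordered pairs `(u, w)` of adjacent vertices of `S` with `u ∈ H • v`. -/
noncomputable def quotDegree (T : SimpleGraph V) (H : Subgroup G) (S : Set V) (v : V) : ℕ :=
  orbCount H (starSet T H S v)

/-- The rank of the quotient graph `T_H/H`, i.e. #edges − #vertices + 1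
(each unordered edge corresponds to two `H`-orbits of ordered edges). -/
noncomputable def quotRank (T : SimpleGraph V) (H : Subgroup G) : ℕ :=
  orbCount H (orderedEdges T (minSubtree T H)) / 2 + 1 - orbCount H (minSubtree T H)

open Classical in
/-- The complexity `C_T(H)`: if `H` contains a hyperbolic element it is
`r(T_H/H) + #(H-orbits of H-nondegenerate vertices of T_H)`, and `1` otherwise. -/
noncomputable def complexity (T : SimpleGraph V) (H : Subgroup G) : ℕ :=
  if ∃ h ∈ H, IsHyperbolic T h then
    quotRank T H + orbCount H (ndegSet T H (minSubtree T H))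
  else 1

/-- The reduced complexity `C̄_T(H) = max {C_T(H) − 1, 0}`. -/
noncomputable def rComplexity (T : SimpleGraph V) (H : Subgroup G) : ℕ :=
  complexity T H - 1

/-- `H` is tame: either `H` fixes a vertex, or `H` contains a hyperbolic element
and the quotient graph `T_H/H` is finite. -/
def Tame (T : SimpleGraph V) (H : Subgroup G) : Prop :=
  (∃ v : V, ∀ h ∈ H, h • v = v) ∨
    ((∃ h ∈ H, IsHyperbolic T h) ∧ QuotFinite H (minSubtree T H) ∧
      QuotFinite H (orderedEdges T (minSubtree T H)))

end Paper

open Paper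

section AuxGeneral

variable {G α : Type*} [Group G] [MulAction G α]

lemma aux_inj_toFull (H : Type*) [Group H] [MulAction H α] (S : Set α) :
    ∃ f : Quotient (Setoid.comap (Subtype.val : S → α) (MulAction.orbitRel H α)) →
      Quotient (MulAction.orbitRel H α), Function.Injective f := by
  refine ⟨Quotient.map' Subtype.val (fun a b h => h), ?_⟩
  intro x y
  induction x using Quotient.inductionOn'
  induction y using Quotient.inductionOn'
  simp only [Quotient.map'_mk'']
  intro h
  have h2 := Quotient.exact' h
  exact Quotient.sound' h2

lemma aux_inj_subset (H : Type*) [Group H] [MulAction H α] {S S' : Set α} (hss : S ⊆ S') :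
    ∃ f : Quotient (Setoid.comap (Subtype.val : S → α) (MulAction.orbitRel H α)) →
      Quotient (Setoid.comap (Subtype.val : S' → α) (MulAction.orbitRel H α)),
      Function.Injective f := by
  refine ⟨Quotient.map' (Set.inclusion hss) (fun a b h => h), ?_⟩
  intro x y
  induction x using Quotient.inductionOn'
  induction y using Quotient.inductionOn'
  simp only [Quotient.map'_mk'']
  intro h
  have h2 := Quotient.exact' h
  exact Quotient.sound' h2

lemma aux_finite_comap (H : Subgroup G) [H.FiniteIndex] (S : Set α)
    (hS : ∀ (g : G), ∀ a ∈ S, g • a ∈ S)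
    (hfin : Finite (Quotient (Setoid.comap (Subtype.val : S → α) (MulAction.orbitRel G α)))) :
    Finite (Quotient (Setoid.comap (Subtype.val : S → α) (MulAction.orbitRel H α))) := by
  have : Finite (Quotient (QuotientGroup.rightRel H)) :=
    Finite.of_equiv _ (QuotientGroup.quotientRightRelEquivQuotientLeftRel H).symm
  set f : Quotient (QuotientGroup.rightRel H) ×
      Quotient (Setoid.comap (Subtype.val : S → α) (MulAction.orbitRel G α)) →
      Quotient (Setoid.comap (Subtype.val : S → α) (MulAction.orbitRel H α)) :=
    fun q => Quotient.mk'' ⟨q.1.out • (q.2.out : S).val, hS _ _ (q.2.out : S).prop⟩ with hf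
  apply Finite.of_surjective f
  rintro x
  induction x using Quotient.inductionOn' with
  | h a =>
    obtain ⟨b, hb⟩ := a
    set o : Quotient (Setoid.comap (Subtype.val : S → α) (MulAction.orbitRel G α)) :=
      Quotient.mk'' ⟨b, hb⟩ with ho
    have h1 : Quotient.mk'' (⟨b, hb⟩ : S) = Quotient.mk'' o.out := (Quotient.out_eq' o).symm
    have hrel' := Quotient.exact' h1
    have hrel : (MulAction.orbitRel G α) b (o.out : S).val := hrel'
    rw [MulAction.orbitRel_apply, MulAction.mem_orbit_iff] at hrel
    obtain ⟨g, hg⟩ := hrel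
    set q : Quotient (QuotientGroup.rightRel H) := Quotient.mk'' g with hq
    have hq' : g * q.out⁻¹ ∈ H := by
      have h2 : Quotient.mk'' q.out = Quotient.mk'' g := Quotient.out_eq' q
      have h3 := Quotient.exact' h2
      have h4 : (QuotientGroup.rightRel H) q.out g := h3
      rwa [QuotientGroup.rightRel_apply] at h4
    refine ⟨(q, o), ?_⟩
    simp only [hf]
    apply Quotient.sound'
    show (MulAction.orbitRel H α) (q.out • (o.out : S).val) b
    rw [MulAction.orbitRel_apply, MulAction.mem_orbit_iff]
    refine ⟨⟨q.out * g⁻¹, by simpa using inv_mem hq'⟩, ?_⟩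
    show (q.out * g⁻¹) • b = q.out • (o.out : S).val
    rw [← hg, mul_smul, inv_smul_smul]

end AuxGeneral

lemma aux_card_le_mul_of_fibers {α β : Type*} [Finite α] [Finite β] (f : α → β) (n : ℕ)
    (h : ∀ b : β, Nat.card {a : α // f a = b} ≤ n) :
    Nat.card α ≤ n * Nat.card β := by
  classical
  have := Fintype.ofFinite α
  have := Fintype.ofFinite β
  rw [Nat.card_eq_fintype_card, Nat.card_eq_fintype_card]
  rw [← Fintype.card_congr (Equiv.sigmaFiberEquiv f)]
  rw [Fintype.card_sigma]
  calc ∑ b : β, Fintype.card {a : α // f a = b} ≤ ∑ _b : β, n := by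
        apply Finset.sum_le_sum
        intro b _
        rw [← Nat.card_eq_fintype_card]
        exact h b
    _ = n * Fintype.card β := by rw [Finset.sum_const, Finset.card_univ, smul_eq_mul, mul_comm]

lemma aux_infinite_inf {G : Type*} [Group G] (H : Subgroup G) [H.FiniteIndex]
    (B : Subgroup G) (hB : Infinite B) : Infinite (H ⊓ B : Subgroup G) := by
  by_contra hfin
  rw [not_infinite_iff_finite] at hfin
  have hfinfib : ∀ q : G ⧸ H, Finite {b : B // QuotientGroup.mk (b : G) = q} := by
    intro q
    rcases isEmpty_or_nonempty {b : B // QuotientGroup.mk (b : G) = q} with he | hne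
    · infer_instance
    · obtain ⟨⟨b₀, hb₀⟩⟩ := hne
      have hinj : Function.Injective (fun x : {b : B // QuotientGroup.mk (b : G) = q} =>
          (⟨(b₀ : G)⁻¹ * (x.1 : G), Subgroup.mem_inf.mpr
            ⟨QuotientGroup.eq.mp (hb₀.trans x.2.symm),
             mul_mem (inv_mem b₀.2) x.1.2⟩⟩ : (H ⊓ B : Subgroup G))) := by
        intro x y hxy
        have h5 := congrArg (fun z : (H ⊓ B : Subgroup G) => (b₀ : G) * (z : G)) hxy
        simp only [mul_inv_cancel_left] at h5
        ext
        exact h5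
      exact Finite.of_injective _ hinj
  have hfinB : Finite B := by
    have h6 : Finite (Σ q : G ⧸ H, {b : B // QuotientGroup.mk (b : G) = q}) := by
      have := Subgroup.finite_quotient_of_finiteIndex (G := G) (H := H)
      exact Finite.instSigma
    exact Finite.of_equiv _
      (Equiv.sigmaFiberEquiv (fun b : B => (QuotientGroup.mk (b : G) : G ⧸ H)))
  exact not_finite_iff_infinite.mpr hB hfinB

lemma aux_even_card {α : Type*} [Finite α] (f : α → α) (hf : Function.Involutive f)
    (hfp : ∀ a, f a ≠ a) : Even (Nat.card α) := by
  classical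
  have := Fintype.ofFinite α
  rw [Nat.card_eq_fintype_card]
  suffices h : ∀ s : Finset α, (∀ a ∈ s, f a ∈ s) → Even s.card by
    simpa using h Finset.univ (by simp)
  intro s
  induction s using Finset.strongInduction with
  | _ s ih =>
    intro hcl
    rcases s.eq_empty_or_nonempty with rfl | ⟨a, ha⟩
    · simp
    · have hfa : f a ∈ s := hcl a ha
      have hne : f a ≠ a := hfp a
      set s' := s \ {a, f a} with hs'
      have hss : ({a, f a} : Finset α) ⊆ s := by
        intro x hx
        simp only [Finset.mem_insert, Finset.mem_singleton] at hx
        rcases hx with rfl | rfl <;> assumption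
      have h2 : ({a, f a} : Finset α).card = 2 := by
        rw [Finset.card_insert_of_notMem (by simpa using hne.symm), Finset.card_singleton]
      have hsub : s' ⊂ s := Finset.sdiff_ssubset hss ⟨a, by simp⟩
      have hcl' : ∀ b ∈ s', f b ∈ s' := by
        intro b hb
        simp only [hs', Finset.mem_sdiff, Finset.mem_insert, Finset.mem_singleton,
          not_or] at hb ⊢
        refine ⟨hcl b hb.1, ?_, ?_⟩
        · intro h; exact hb.2.2 (hf.injective (h.trans (hf a).symm))
        · intro h; exact hb.2.1 (hf.injective h)
      have hcard : s'.card = s.card - 2 := by rw [hs', Finset.card_sdiff_of_subset hss, h2]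
      have hle : 2 ≤ s.card := h2 ▸ Finset.card_le_card hss
      rcases ih s' hsub hcl' with ⟨k, hk⟩
      exact ⟨k + 1, by omega⟩

lemma aux_connected_count {β : Type*} [Finite β] (Q : SimpleGraph β) (hQ : Q.Connected) :
    Nat.card β ≤ Nat.card Q.Dart / 2 + 1 := by
  classical
  have := Fintype.ofFinite β
  obtain ⟨r⟩ := hQ.nonempty
  have hfinD : Finite Q.Dart :=
    Finite.of_injective (fun d => d.toProd) (fun d1 d2 h => SimpleGraph.Dart.ext d1 d2 h)
  have hparent : ∀ b : β, b ≠ r → ∃ c, Q.Adj b c ∧ Q.dist c r < Q.dist b r := by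
    intro b hb
    obtain ⟨p, hl⟩ := hQ.exists_walk_length_eq_dist b r
    have hpos : 0 < Q.dist b r := hQ.pos_dist_of_ne hb
    cases p with
    | nil => rw [SimpleGraph.Walk.length_nil] at hl; omega
    | @cons _ c _ h q =>
      refine ⟨c, h, ?_⟩
      have h1 : Q.dist c r ≤ q.length := SimpleGraph.dist_le q
      rw [SimpleGraph.Walk.length_cons] at hl
      omega
  set par : {b : β // b ≠ r} → β := fun b => (hparent b.1 b.2).choose with hpar
  have hadj : ∀ b : {b : β // b ≠ r}, Q.Adj b.1 (par b) := fun b => (hparent b.1 b.2).choose_spec.1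
  have hdist : ∀ b : {b : β // b ≠ r}, Q.dist (par b) r < Q.dist b.1 r :=
    fun b => (hparent b.1 b.2).choose_spec.2
  set φ : {b : β // b ≠ r} × Bool → Q.Dart := fun x =>
    if x.2 then ⟨(x.1.1, par x.1), hadj x.1⟩ else ⟨(par x.1, x.1.1), (hadj x.1).symm⟩ with hφ
  have hinj : Function.Injective φ := by
    rintro ⟨b, i⟩ ⟨c, j⟩ hbc
    simp only [hφ] at hbc
    have hp := congrArg SimpleGraph.Dart.toProd hbc
    cases i <;> cases j <;>
      simp only [if_true, if_false, Bool.false_eq_true, SimpleGraph.Dart.toProd,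
        Prod.mk.injEq] at hp
    · obtain ⟨h1, h2⟩ := hp
      rw [Prod.mk.injEq]
      exact ⟨Subtype.ext h2, rfl⟩
    · obtain ⟨h1, h2⟩ := hp
      have d1 := hdist b
      have d2 := hdist c
      rw [h1] at d1
      rw [← h2] at d2
      omega
    · obtain ⟨h1, h2⟩ := hp
      have d1 := hdist b
      have d2 := hdist c
      rw [h2] at d1
      rw [← h1] at d2
      omega
    · obtain ⟨h1, h2⟩ := hp
      rw [Prod.mk.injEq]
      exact ⟨Subtype.ext h1, rfl⟩
  have hcard1 : 2 * (Nat.card β - 1) ≤ Nat.card Q.Dart := by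
    have h3 := Nat.card_le_card_of_injective φ hinj
    rw [Nat.card_prod] at h3
    have h4 : Nat.card {b : β // b ≠ r} = Nat.card β - 1 := by
      rw [Nat.card_eq_fintype_card, Nat.card_eq_fintype_card]
      have := Fintype.card_subtype_compl (fun b : β => b = r)
      simp only [Fintype.card_subtype_eq] at this
      convert this using 2
    have h5 : Nat.card Bool = 2 := by simp [Nat.card_eq_fintype_card]
    rw [h4, h5] at h3
    omega
  omega

lemma aux_lift_walk {V : Type*} {T : SimpleGraph V} (M : Set V) :
    ∀ {u v : V} (q : T.Walk u v) (hq : ∀ z ∈ q.support, z ∈ M),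
      (T.induce M).Reachable ⟨u, hq u q.start_mem_support⟩ ⟨v, hq v q.end_mem_support⟩ := by
  intro u v q
  induction q with
  | nil => intro hq; rfl
  | @cons a b c h q ih =>
    intro hq
    have hb : b ∈ M := hq b (by simp [SimpleGraph.Walk.support_cons])
    have ha : a ∈ M := hq a (by simp [SimpleGraph.Walk.support_cons])
    have hrest : ∀ z ∈ q.support, z ∈ M := fun z hz =>
      hq z (by simp [SimpleGraph.Walk.support_cons, hz])
    have hadj : (T.induce M).Adj ⟨a, ha⟩ ⟨b, hb⟩ := h
    exact hadj.reachable.trans (ih hrest)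

lemma aux_sInter_reachable {V : Type*} {T : SimpleGraph V} (hconn : T.Connected)
    (hacyc : T.IsAcyclic) (F : Set (Set V)) (hF : ∀ S ∈ F, (T.induce S).Connected)
    {x y : V} (hx : x ∈ ⋂₀ F) (hy : y ∈ ⋂₀ F) :
    (T.induce (⋂₀ F)).Reachable ⟨x, hx⟩ ⟨y, hy⟩ := by
  classical
  obtain ⟨p₀⟩ := hconn.preconnected x y
  have hsup : ∀ z ∈ p₀.bypass.support, z ∈ ⋂₀ F := by
    intro z hz
    rw [Set.mem_sInter]
    intro S hS
    have hxS : x ∈ S := hx S hS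
    have hyS : y ∈ S := hy S hS
    obtain ⟨w⟩ := (hF S hS).preconnected ⟨x, hxS⟩ ⟨y, hyS⟩
    set hom : T.induce S →g T := ⟨Subtype.val, fun {a b} h => h⟩ with hhom
    have hweq : p₀.bypass = (w.map hom).bypass := by
      have := hacyc.path_unique ⟨p₀.bypass, p₀.bypass_isPath⟩
        ⟨(w.map hom).bypass, (w.map hom).bypass_isPath⟩
      exact congrArg Subtype.val this
    rw [hweq] at hz
    have h1 : z ∈ (w.map hom).support := (w.map hom).support_bypass_subset hz
    rw [SimpleGraph.Walk.support_map] at h1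
    obtain ⟨z', _, rfl⟩ := List.mem_map.mp h1
    exact z'.2
  exact aux_lift_walk (⋂₀ F) p₀.bypass hsup

section PaperAux
variable {G V : Type*} [Group G] [MulAction G V]

lemma minSubtree_mono (T : SimpleGraph V) {L H : Subgroup G} (hLH : L ≤ H) :
    minSubtree T L ⊆ minSubtree T H := by
  apply Set.sInter_subset_sInter
  intro S hS
  exact ⟨fun l hl => hS.1 l (hLH hl), hS.2⟩

lemma minSubtree_inv (T : SimpleGraph V) (L : Subgroup G) :
    ∀ g ∈ L, ∀ v ∈ minSubtree T L, g • v ∈ minSubtree T L := by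
  intro g hg v hv
  rw [minSubtree, Set.mem_sInter] at hv ⊢
  intro S hS
  exact hS.1 g hg v (hv S hS)

lemma ndeg_eq (T : SimpleGraph V)
    (hstabfin : ∀ u w : V, T.Adj u w →
      Finite (MulAction.stabilizer G u ⊓ MulAction.stabilizer G w : Subgroup G))
    (hstabinf : ∀ v : V, Infinite (MulAction.stabilizer G v))
    (H : Subgroup G) [H.FiniteIndex] (S : Set V) :
    ndegSet T H S = S := by
  ext v
  simp only [ndegSet, Set.mem_setOf_eq, Set.mem_sep_iff]
  refine ⟨fun h => h.1, fun hv => ⟨hv, ?_⟩⟩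
  rintro ⟨w, hwS, hadj, hle⟩
  have hfin : Finite (MulAction.stabilizer G v ⊓ MulAction.stabilizer G w : Subgroup G) :=
    hstabfin v w hadj
  have h1 : H ⊓ MulAction.stabilizer G v ≤
      MulAction.stabilizer G v ⊓ MulAction.stabilizer G w := le_inf inf_le_right hle
  have h2 : Finite (H ⊓ MulAction.stabilizer G v : Subgroup G) :=
    Finite.of_injective (Subgroup.inclusion h1) (Subgroup.inclusion_injective h1)
  have h3 : Infinite (H ⊓ MulAction.stabilizer G v : Subgroup G) :=
    aux_infinite_inf H (MulAction.stabilizer G v) (hstabinf v)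
  exact not_finite_iff_infinite.mpr h3 h2

lemma even_orbCount_edges (T : SimpleGraph V)
    (hninv : ∀ (g : G) (u w : V), T.Adj u w → ¬(g • u = w ∧ g • w = u))
    (H : Subgroup G) (S : Set V)
    (hfin : Finite (Quotient (Setoid.comap (Subtype.val : orderedEdges T S → V × V)
      (MulAction.orbitRel H (V × V))))) :
    Even (orbCount H (orderedEdges T S)) := by
  set E := orderedEdges T S with hE
  set swp : E → E := fun p => ⟨(p.1.2, p.1.1), p.2.2.1, p.2.1, p.2.2.2.symm⟩ with hswp
  have hrel : ∀ a b : E,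
      (Setoid.comap (Subtype.val : E → V × V) (MulAction.orbitRel H (V × V))) a b →
      (Setoid.comap (Subtype.val : E → V × V) (MulAction.orbitRel H (V × V)))
        (swp a) (swp b) := by
    intro a b hab
    obtain ⟨γ, hγ⟩ := hab
    refine ⟨γ, ?_⟩
    have h1 : γ • (b : V × V) = (a : V × V) := hγ
    show γ • ((b : V × V).2, (b : V × V).1) = ((a : V × V).2, (a : V × V).1)
    rw [Prod.smul_mk]
    rw [← h1]
    rfl
  set σ : Quotient (Setoid.comap (Subtype.val : E → V × V) (MulAction.orbitRel H (V × V))) →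
      Quotient (Setoid.comap (Subtype.val : E → V × V) (MulAction.orbitRel H (V × V))) :=
    Quotient.map' swp hrel with hσ
  have hinv : Function.Involutive σ := by
    intro q
    induction q using Quotient.inductionOn' with
    | h p =>
      simp only [hσ, Quotient.map'_mk'']
      rfl
  have hfp : ∀ q, σ q ≠ q := by
    intro q
    induction q using Quotient.inductionOn' with
    | h p =>
      simp only [hσ, Quotient.map'_mk'']
      intro h
      have h2 := Quotient.exact' h
      obtain ⟨γ, hγ⟩ := h2
      have h3 : (γ : G) • (p : V × V) = ((p : V × V).2, (p : V × V).1) := hγ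
      have h4 : (γ : G) • (p : V × V).1 = (p : V × V).2 ∧
          (γ : G) • (p : V × V).2 = (p : V × V).1 := by
        constructor
        · exact congrArg Prod.fst h3
        · exact congrArg Prod.snd h3
      exact hninv γ (p : V × V).1 (p : V × V).2 p.2.2.2 h4
  exact aux_even_card σ hinv hfp

lemma vcount_le (T : SimpleGraph V) (L : Subgroup G) (S : Set V)
    (hScon : (T.induce S).Connected)
    (hfinV : Finite (Quotient (Setoid.comap (Subtype.val : S → V) (MulAction.orbitRel L V))))
    (hfinE : Finite (Quotient (Setoid.comap (Subtype.val : orderedEdges T S → V × V)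
      (MulAction.orbitRel L (V × V))))) :
    orbCount L S ≤ orbCount L (orderedEdges T S) / 2 + 1 := by
  classical
  set s := Setoid.comap (Subtype.val : S → V) (MulAction.orbitRel L V) with hs
  set Q : SimpleGraph (Quotient s) :=
    { Adj := fun a b => a ≠ b ∧ ∃ u w : S, T.Adj u.val w.val ∧
        Quotient.mk'' u = a ∧ Quotient.mk'' w = b
      symm := by
        refine ⟨?_⟩
        rintro a b ⟨hne, u, w, hadj, hu, hw⟩
        exact ⟨hne.symm, w, u, hadj.symm, hw, hu⟩
      loopless := ⟨by rintro a ⟨hne, -⟩; exact hne rfl⟩ } with hQdef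
  have hstep : ∀ (u w : S), (T.induce S).Walk u w →
      Q.Reachable (Quotient.mk'' u) (Quotient.mk'' w) := by
    intro u w p
    induction p with
    | nil => rfl
    | @cons a b c h q ih =>
      by_cases heq : (Quotient.mk'' a : Quotient s) = Quotient.mk'' b
      · rw [heq]; exact ih
      · refine (SimpleGraph.Adj.reachable ?_).trans ih
        exact ⟨heq, a, b, h, rfl, rfl⟩
  have hQconn : Q.Connected := by
    have hne : Nonempty S := hScon.nonempty
    rw [SimpleGraph.connected_iff]
    refine ⟨?_, ⟨Quotient.mk'' hne.some⟩⟩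
    intro a b
    induction a using Quotient.inductionOn' with
    | h u =>
      induction b using Quotient.inductionOn' with
      | h w =>
        obtain ⟨p⟩ := hScon.preconnected u w
        exact hstep u w p
  set EQ := Quotient (Setoid.comap (Subtype.val : orderedEdges T S → V × V)
      (MulAction.orbitRel L (V × V))) with hEQ
  have hwit : ∀ d : Q.Dart, ∃ u w : S, T.Adj u.val w.val ∧
      Quotient.mk'' u = d.toProd.1 ∧ Quotient.mk'' w = d.toProd.2 := fun d => d.adj.2
  set f : Q.Dart → EQ := fun d =>
    Quotient.mk'' ⟨(((hwit d).choose : S).val, ((hwit d).choose_spec.choose : S).val),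
      ((hwit d).choose : S).2, ((hwit d).choose_spec.choose : S).2,
      (hwit d).choose_spec.choose_spec.1⟩ with hf
  have hinjf : Function.Injective f := by
    intro d1 d2 h12
    obtain ⟨hadj1, hu1, hw1⟩ := (hwit d1).choose_spec.choose_spec
    obtain ⟨hadj2, hu2, hw2⟩ := (hwit d2).choose_spec.choose_spec
    set u1 := (hwit d1).choose; set w1 := (hwit d1).choose_spec.choose
    set u2 := (hwit d2).choose; set w2 := (hwit d2).choose_spec.choose
    have h2 := Quotient.exact' h12
    obtain ⟨γ, hγ⟩ := h2
    have hγ' : (γ : G) • ((u2 : V), (w2 : V)) = ((u1 : V), (w1 : V)) := hγ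
    have hrelu : (γ : G) • (u2 : V) = (u1 : V) := congrArg Prod.fst hγ'
    have hrelw : (γ : G) • (w2 : V) = (w1 : V) := congrArg Prod.snd hγ'
    have hqu : (Quotient.mk'' u1 : Quotient s) = Quotient.mk'' u2 :=
      Quotient.sound' ⟨γ, hrelu⟩
    have hqw : (Quotient.mk'' w1 : Quotient s) = Quotient.mk'' w2 :=
      Quotient.sound' ⟨γ, hrelw⟩
    apply SimpleGraph.Dart.ext
    have e1 : d1.toProd.1 = d2.toProd.1 := by rw [← hu1, ← hu2, hqu]
    have e2 : d1.toProd.2 = d2.toProd.2 := by rw [← hw1, ← hw2, hqw]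
    exact Prod.ext e1 e2
  have hfinD : Finite Q.Dart := Finite.of_injective f hinjf
  have h3 : Nat.card Q.Dart ≤ Nat.card EQ := Nat.card_le_card_of_injective f hinjf
  have h4 := aux_connected_count Q hQconn
  have h5 : Nat.card Q.Dart / 2 ≤ Nat.card EQ / 2 := Nat.div_le_div_right h3
  calc orbCount L S = Nat.card (Quotient s) := rfl
    _ ≤ Nat.card Q.Dart / 2 + 1 := h4
    _ ≤ Nat.card EQ / 2 + 1 := by omega
    _ = orbCount L (orderedEdges T S) / 2 + 1 := rfl

end PaperAux

section PaperAux2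
variable {G V : Type*} [Group G] [MulAction G V]

lemma ecount_le (T : SimpleGraph V)
    (hadj : ∀ (g : G) (u w : V), T.Adj u w → T.Adj (g • u) (g • w))
    (hstabfin : ∀ u w : V, T.Adj u w →
      Finite (MulAction.stabilizer G u ⊓ MulAction.stabilizer G w : Subgroup G))
    (H K : Subgroup G) (N : ℕ)
    (hN : ∀ u w : V, T.Adj u w →
      Nat.card {g : G | g ∈ (H : Set G) * (K : Set G) ∧ g • u = u ∧ g • w = w} ≤ N)
    (SL SH SK : Set V) (hLH : SL ⊆ SH) (hLK : SL ⊆ SK)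
    (hSLinv : ∀ g ∈ H ⊓ K, ∀ v ∈ SL, g • v ∈ SL)
    (hfinL : Finite (Quotient (Setoid.comap (Subtype.val : orderedEdges T SL → V × V)
      (orbitRel (H ⊓ K : Subgroup G) (V × V)))))
    (hfinH : Finite (Quotient (Setoid.comap (Subtype.val : orderedEdges T SH → V × V)
      (orbitRel H (V × V)))))
    (hfinK : Finite (Quotient (Setoid.comap (Subtype.val : orderedEdges T SK → V × V)
      (orbitRel K (V × V))))) :
    orbCount (H ⊓ K : Subgroup G) (orderedEdges T SL) ≤
      N * (orbCount H (orderedEdges T SH) * orbCount K (orderedEdges T SK)) := by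
  classical
  set L : Subgroup G := H ⊓ K with hL
  set EL := orderedEdges T SL with hEL
  set EH := orderedEdges T SH with hEH
  set EK := orderedEdges T SK with hEK
  have hELH : EL ⊆ EH := fun p hp => ⟨hLH hp.1, hLH hp.2.1, hp.2.2⟩
  have hELK : EL ⊆ EK := fun p hp => ⟨hLK hp.1, hLK hp.2.1, hp.2.2⟩
  set QL := Quotient (Setoid.comap (Subtype.val : EL → V × V) (orbitRel L (V × V))) with hQL
  set QH := Quotient (Setoid.comap (Subtype.val : EH → V × V) (orbitRel H (V × V))) with hQH
  set QK := Quotient (Setoid.comap (Subtype.val : EK → V × V) (orbitRel K (V × V))) with hQK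
  set φH : QL → QH := Quotient.map' (Set.inclusion hELH)
    (fun a b hab => by
      obtain ⟨γ, hγ⟩ := hab
      exact ⟨⟨(γ : G), (inf_le_left : L ≤ H) γ.2⟩, hγ⟩) with hφH
  set φK : QL → QK := Quotient.map' (Set.inclusion hELK)
    (fun a b hab => by
      obtain ⟨γ, hγ⟩ := hab
      exact ⟨⟨(γ : G), (inf_le_right : L ≤ K) γ.2⟩, hγ⟩) with hφK
  set Φ : QL → QH × QK := fun q => (φH q, φK q) with hΦ
  have hfib : ∀ b : QH × QK, Nat.card {q : QL // Φ q = b} ≤ N := by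
    intro b
    rcases isEmpty_or_nonempty {q : QL // Φ q = b} with he | hne
    · simp [Nat.card_of_isEmpty]
    · obtain ⟨⟨q₀, hq₀⟩⟩ := hne
      set x₀ : EL := q₀.out with hx₀def
      have hx₀ : (Quotient.mk'' x₀ : QL) = q₀ := Quotient.out_eq' q₀
      obtain ⟨hu₀, hw₀, hadj₀⟩ := x₀.2
      set u := (x₀ : V × V).1 with hu
      set w := (x₀ : V × V).2 with hw
      set D := {g : G | g ∈ (H : Set G) * (K : Set G) ∧ g • u = u ∧ g • w = w} with hD
      have hfinD : Finite D := by
        have : Finite (MulAction.stabilizer G u ⊓ MulAction.stabilizer G w : Subgroup G) :=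
          hstabfin u w hadj₀
        exact Finite.of_injective
          (fun g : D => (⟨g.1, Subgroup.mem_inf.mpr ⟨g.2.2.1, g.2.2.2⟩⟩ :
            (MulAction.stabilizer G u ⊓ MulAction.stabilizer G w : Subgroup G)))
          (fun a b hab => by
            have h9 := Subtype.ext_iff.mp hab
            ext
            exact h9)
      -- the decomposition choice for each g in D
      have hdec : ∀ g : D, ∃ h ∈ H, ∃ k ∈ K, h * k = (g : G) := fun g => Set.mem_mul.mp g.2.1
      set dh : D → G := fun g => (hdec g).choose with hdh
      have hdh1 : ∀ g : D, dh g ∈ H := fun g => (hdec g).choose_spec.1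
      have hdk : ∀ g : D, ∃ k ∈ K, dh g * k = (g : G) := fun g => (hdec g).choose_spec.2
      set dk : D → G := fun g => (hdk g).choose with hdkdef
      have hdk1 : ∀ g : D, dk g ∈ K := fun g => (hdk g).choose_spec.1
      have hdk2 : ∀ g : D, dh g * dk g = (g : G) := fun g => (hdk g).choose_spec.2
      set ψ : D → {q : QL // Φ q = b} := fun g =>
        if hc : ∃ (hy : (dh g)⁻¹ • (x₀ : V × V) ∈ EL),
            Φ (Quotient.mk'' (⟨(dh g)⁻¹ • (x₀ : V × V), hy⟩ : EL)) = b then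
          ⟨Quotient.mk'' ⟨(dh g)⁻¹ • (x₀ : V × V), hc.choose⟩, hc.choose_spec⟩
        else ⟨q₀, hq₀⟩ with hψ
      have hsurj : Function.Surjective ψ := by
        rintro ⟨q, hq⟩
        set x : EL := q.out with hxdef
        have hxq : (Quotient.mk'' x : QL) = q := Quotient.out_eq' q
        -- same H-orbit
        have hq' : Φ q = Φ q₀ := hq.trans hq₀.symm
        have hH1 : φH q = φH q₀ := congrArg Prod.fst hq'
        have hK1 : φK q = φK q₀ := congrArg Prod.snd hq'
        have hHrel : ∃ η : H, (η : G) • (x₀ : V × V) = (x : V × V) := by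
          rw [← hxq, ← hx₀] at hH1
          simp only [hφH, Quotient.map'_mk''] at hH1
          have h2 := Quotient.exact' hH1
          obtain ⟨η, hη⟩ := h2
          exact ⟨η, hη⟩
        have hKrel : ∃ κ : K, (κ : G) • (x₀ : V × V) = (x : V × V) := by
          rw [← hxq, ← hx₀] at hK1
          simp only [hφK, Quotient.map'_mk''] at hK1
          have h2 := Quotient.exact' hK1
          obtain ⟨κ, hκ⟩ := h2
          exact ⟨κ, hκ⟩
        obtain ⟨η, hη⟩ := hHrel
        obtain ⟨κ, hκ⟩ := hKrel
        set g : G := (η : G)⁻¹ * (κ : G) with hg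
        have hgx₀ : g • (x₀ : V × V) = (x₀ : V × V) := by
          rw [hg, mul_smul, hκ, ← hη, inv_smul_smul]
        have hgD : g ∈ D := by
          refine ⟨Set.mem_mul.mpr ⟨(η : G)⁻¹, inv_mem η.2, (κ : G), κ.2, rfl⟩, ?_, ?_⟩
          · have := congrArg Prod.fst hgx₀
            exact this
          · have := congrArg Prod.snd hgx₀
            exact this
        set gD : D := ⟨g, hgD⟩ with hgDdef
        -- the chosen decomposition h * k = g
        set h' : G := dh gD with hh'
        set k' : G := dk gD with hk'
        have hdecomp : h' * k' = g := hdk2 gD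
        -- l := η * h' lies in L and l • (h'⁻¹ • x₀) = x
        set l : G := (η : G) * h' with hldef
        have hlH : l ∈ H := mul_mem η.2 (hdh1 gD)
        have hlK : l ∈ K := by
          have h1 : (η : G) * h' * k' = (κ : G) := by
            rw [mul_assoc, hdecomp, hg, ← mul_assoc, mul_inv_cancel, one_mul]
          have h2 : l = (κ : G) * k'⁻¹ := by
            rw [← h1, mul_inv_cancel_right]
          rw [h2]
          exact mul_mem κ.2 (inv_mem (hdk1 gD))
        have hlL : l ∈ L := Subgroup.mem_inf.mpr ⟨hlH, hlK⟩
        have hkey : h'⁻¹ • (x₀ : V × V) = l⁻¹ • (x : V × V) := by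
          rw [hldef, ← hη]
          rw [mul_inv_rev, mul_smul, inv_smul_smul]
        have hyEL : h'⁻¹ • (x₀ : V × V) ∈ EL := by
          rw [hkey]
          have hxm := x.2
          refine ⟨?_, ?_, ?_⟩
          · exact hSLinv l⁻¹ (inv_mem hlL) _ hxm.1
          · exact hSLinv l⁻¹ (inv_mem hlL) _ hxm.2.1
          · exact hadj l⁻¹ _ _ hxm.2.2
        have hmkeq : (Quotient.mk'' (⟨h'⁻¹ • (x₀ : V × V), hyEL⟩ : EL) : QL) = q := by
          rw [← hxq]
          apply Quotient.sound'
          refine ⟨⟨l⁻¹, inv_mem hlL⟩, ?_⟩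
          show l⁻¹ • (x : V × V) = h'⁻¹ • (x₀ : V × V)
          rw [hkey]
        have hc : ∃ (hy : h'⁻¹ • (x₀ : V × V) ∈ EL),
            Φ (Quotient.mk'' (⟨h'⁻¹ • (x₀ : V × V), hy⟩ : EL)) = b := by
          refine ⟨hyEL, ?_⟩
          rw [hmkeq]
          exact hq
        refine ⟨gD, ?_⟩
        rw [hψ]
        beta_reduce
        rw [dif_pos hc]
        apply Subtype.ext
        show (Quotient.mk'' _ : QL) = q
        rw [← hmkeq]
      have h6 : Nat.card {q : QL // Φ q = b} ≤ Nat.card D :=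
        Nat.card_le_card_of_surjective ψ hsurj
      exact h6.trans (hN u w hadj₀)
  have h7 := aux_card_le_mul_of_fibers Φ N hfib
  rw [Nat.card_prod] at h7
  exact h7

end PaperAux2

/-- **Corollary.** If every vertex stabilizer is infinite and `H`, `K` have finite
index in `G`, then `C̄_T(H ∩ K) ≤ 2N · C̄_T(H) · C̄_T(K)`. -/
theorem rComplexity_inter_le_of_finite_index
    {V G : Type*} [Group G] [MulAction G V]
    (T : SimpleGraph V) (hconn : T.Connected) (hacyc : T.IsAcyclic)
    (hadj : ∀ (g : G) (u w : V), T.Adj u w → T.Adj (g • u) (g • w))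
    (hninv : ∀ (g : G) (u w : V), T.Adj u w → ¬(g • u = w ∧ g • w = u))
    (hVorb : Finite (Quotient (MulAction.orbitRel G V)))
    (hEorb : Paper.QuotFinite G {p : V × V | T.Adj p.1 p.2})
    (hstabfin : ∀ u w : V, T.Adj u w →
      Finite (MulAction.stabilizer G u ⊓ MulAction.stabilizer G w : Subgroup G))
    (hstabinf : ∀ v : V, Infinite (MulAction.stabilizer G v))
    (H K : Subgroup G) (hHfi : H.FiniteIndex) (hKfi : K.FiniteIndex)
    (N : ℕ)
    -- `N` bounds `|G_x ∩ HK|` over all edges `x` of `T`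
    (hN : ∀ u w : V, T.Adj u w →
      Nat.card {g : G | g ∈ (H : Set G) * (K : Set G) ∧ g • u = u ∧ g • w = w} ≤ N) :
    Paper.rComplexity T (H ⊓ K) ≤
      2 * N * Paper.rComplexity T H * Paper.rComplexity T K := by
  classical
  haveI := hHfi
  haveI := hKfi
  haveI hLfi : (H ⊓ K).FiniteIndex := inferInstance
  -- general finiteness of orbit quotients of vertex and edge subsets
  have hfinVQ : ∀ (J : Subgroup G), J.FiniteIndex → ∀ (S : Set V),
      Finite (Quotient (Setoid.comap (Subtype.val : S → V) (MulAction.orbitRel J V))) := by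
    intro J hJ S
    haveI := hJ
    set U : Set V := Set.univ with hU
    have hGuniv : Finite (Quotient (Setoid.comap (Subtype.val : U → V)
        (MulAction.orbitRel G V))) := by
      obtain ⟨f2, hf2⟩ := aux_inj_toFull G U
      exact Finite.of_injective f2 hf2
    have hJuniv : Finite (Quotient (Setoid.comap (Subtype.val : U → V)
        (MulAction.orbitRel J V))) :=
      aux_finite_comap J U (fun g a _ => Set.mem_univ _) hGuniv
    obtain ⟨f, hf⟩ := aux_inj_subset (↥J) (Set.subset_univ S : S ⊆ U)
    exact Finite.of_injective f hf
  have hfinEQ : ∀ (J : Subgroup G), J.FiniteIndex → ∀ (S : Set V),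
      Finite (Quotient (Setoid.comap
        (Subtype.val : Paper.orderedEdges T S → V × V) (MulAction.orbitRel J (V × V)))) := by
    intro J hJ S
    haveI := hJ
    have hsub : Paper.orderedEdges T S ⊆ {p : V × V | T.Adj p.1 p.2} :=
      fun p hp => hp.2.2
    have hAinv : ∀ (g : G), ∀ a ∈ {p : V × V | T.Adj p.1 p.2},
        g • a ∈ {p : V × V | T.Adj p.1 p.2} := by
      intro g a ha
      exact hadj g a.1 a.2 ha
    have hJA : Finite (Quotient (Setoid.comap
        (Subtype.val : {p : V × V | T.Adj p.1 p.2} → V × V) (MulAction.orbitRel J (V × V)))) :=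
      aux_finite_comap J _ hAinv hEorb
    obtain ⟨f, hf⟩ := aux_inj_subset (↥J) hsub
    exact Finite.of_injective f hf
  by_cases hhyp : ∃ g ∈ H ⊓ K, Paper.IsHyperbolic T g
  · -- the subgroups H and K also contain hyperbolic elements
    have hhypH : ∃ g ∈ H, Paper.IsHyperbolic T g := by
      obtain ⟨g, hg, hy⟩ := hhyp
      exact ⟨g, (inf_le_left : H ⊓ K ≤ H) hg, hy⟩
    have hhypK : ∃ g ∈ K, Paper.IsHyperbolic T g := by
      obtain ⟨g, hg, hy⟩ := hhyp
      exact ⟨g, (inf_le_right : H ⊓ K ≤ K) hg, hy⟩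
    -- lower bounds for H and K
    have hlow : ∀ (J : Subgroup G), J.FiniteIndex → (∃ g ∈ J, Paper.IsHyperbolic T g) →
        Paper.orbCount ↥J (Paper.orderedEdges T (Paper.minSubtree T J)) / 2 ≤
          Paper.rComplexity T J := by
      intro J hJ hhypJ
      haveI := hJ
      rw [Paper.rComplexity, Paper.complexity, if_pos hhypJ]
      rw [ndeg_eq T hstabfin hstabinf J (Paper.minSubtree T J)]
      rw [Paper.quotRank]
      have h6 := le_tsub_add (α := ℕ)
        (a := Paper.orbCount ↥J (Paper.minSubtree T J))
        (b := Paper.orbCount ↥J (Paper.orderedEdges T (Paper.minSubtree T J)) / 2 + 1)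
      omega
    -- evenness
    have hfinEH := hfinEQ H hHfi (Paper.minSubtree T H)
    have hfinEK := hfinEQ K hKfi (Paper.minSubtree T K)
    have hfinEL := hfinEQ (H ⊓ K) hLfi (Paper.minSubtree T (H ⊓ K))
    have hfinVL := hfinVQ (H ⊓ K) hLfi (Paper.minSubtree T (H ⊓ K))
    obtain ⟨a, ha⟩ := even_orbCount_edges T hninv H (Paper.minSubtree T H) hfinEH
    obtain ⟨b, hb⟩ := even_orbCount_edges T hninv K (Paper.minSubtree T K) hfinEK
    rcases Set.eq_empty_or_nonempty (Paper.minSubtree T (H ⊓ K)) with hempty | hnonempty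
    · -- empty minimal subtree: reduced complexity is 0
      have i1 : IsEmpty ↥(Paper.minSubtree T (H ⊓ K)) := Set.isEmpty_coe_sort.mpr hempty
      have c1 : Paper.orbCount ↥(H ⊓ K) (Paper.minSubtree T (H ⊓ K)) = 0 :=
        Nat.card_of_isEmpty
      have e2 : Paper.orderedEdges T (Paper.minSubtree T (H ⊓ K)) = ∅ := by
        rw [Set.eq_empty_iff_forall_notMem]
        rintro p ⟨hp1, -⟩
        rw [hempty] at hp1
        exact hp1
      have i2 : IsEmpty ↥(Paper.orderedEdges T (Paper.minSubtree T (H ⊓ K))) :=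
        Set.isEmpty_coe_sort.mpr e2
      have c2 : Paper.orbCount ↥(H ⊓ K) (Paper.orderedEdges T (Paper.minSubtree T (H ⊓ K))) = 0 :=
        Nat.card_of_isEmpty
      have e3 : Paper.ndegSet T (H ⊓ K) (Paper.minSubtree T (H ⊓ K)) = ∅ := by
        rw [Set.eq_empty_iff_forall_notMem]
        rintro v ⟨hv1, -⟩
        rw [hempty] at hv1
        exact hv1
      have i3 : IsEmpty ↥(Paper.ndegSet T (H ⊓ K) (Paper.minSubtree T (H ⊓ K))) :=
        Set.isEmpty_coe_sort.mpr e3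
      have c3 : Paper.orbCount ↥(H ⊓ K)
          (Paper.ndegSet T (H ⊓ K) (Paper.minSubtree T (H ⊓ K))) = 0 :=
        Nat.card_of_isEmpty
      have hz : Paper.rComplexity T (H ⊓ K) = 0 := by
        rw [Paper.rComplexity, Paper.complexity, if_pos hhyp, Paper.quotRank, c1, c2, c3]
      rw [hz]
      exact Nat.zero_le _
    · -- nonempty minimal subtree
      have hconn' : (T.induce (Paper.minSubtree T (H ⊓ K))).Connected := by
        rw [SimpleGraph.connected_iff]
        constructor
        · rintro ⟨x, hx⟩ ⟨y, hy⟩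
          exact aux_sInter_reachable hconn hacyc _ (fun S hS => hS.2) hx hy
        · exact hnonempty.to_subtype
      have hvle := vcount_le T (H ⊓ K) (Paper.minSubtree T (H ⊓ K)) hconn' hfinVL hfinEL
      have hCL : Paper.rComplexity T (H ⊓ K) =
          Paper.orbCount ↥(H ⊓ K) (Paper.orderedEdges T (Paper.minSubtree T (H ⊓ K))) / 2 := by
        rw [Paper.rComplexity, Paper.complexity, if_pos hhyp]
        rw [ndeg_eq T hstabfin hstabinf (H ⊓ K) (Paper.minSubtree T (H ⊓ K))]
        rw [Paper.quotRank]
        omega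
      have hecount := ecount_le T hadj hstabfin H K N hN
        (Paper.minSubtree T (H ⊓ K)) (Paper.minSubtree T H) (Paper.minSubtree T K)
        (minSubtree_mono T inf_le_left) (minSubtree_mono T inf_le_right)
        (minSubtree_inv T (H ⊓ K)) hfinEL hfinEH hfinEK
      -- arithmetic assembly
      have hHa : a ≤ Paper.rComplexity T H := by
        have := hlow H hHfi hhypH
        omega
      have hKb : b ≤ Paper.rComplexity T K := by
        have := hlow K hKfi hhypK
        omega
      obtain ⟨X, hX⟩ : ∃ X, X = 2 * (N * (a * b)) := ⟨_, rfl⟩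
      have hprod : N * (Paper.orbCount ↥H (Paper.orderedEdges T (Paper.minSubtree T H)) *
          Paper.orbCount ↥K (Paper.orderedEdges T (Paper.minSubtree T K))) = X * 2 := by
        rw [hX, ha, hb]
        ring
      have h7 : Paper.orbCount ↥(H ⊓ K)
          (Paper.orderedEdges T (Paper.minSubtree T (H ⊓ K))) ≤ X * 2 :=
        hecount.trans_eq hprod
      have h8 : Paper.orbCount ↥(H ⊓ K)
          (Paper.orderedEdges T (Paper.minSubtree T (H ⊓ K))) / 2 ≤ X := by
        have h9 := Nat.div_le_div_right (c := 2) h7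
        rwa [Nat.mul_div_cancel X (by norm_num)] at h9
      rw [hCL]
      refine h8.trans ?_
      calc X = 2 * (N * (a * b)) := hX
        _ ≤ 2 * (N * (Paper.rComplexity T H * Paper.rComplexity T K)) := by gcongr
        _ = 2 * N * Paper.rComplexity T H * Paper.rComplexity T K := by ring
  · rw [Paper.rComplexity, Paper.complexity, if_neg hhyp]
    simp
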